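/- arXiv:1505.05006 — 2 statements merged into one kernel-verified Lean document; each statement's English description precedes it below -/
import Mathlib

section
/- In the frog model with drift parameter p ∈ [1/2, 1], almost surely S_{T_i}^i / T_i converges to 2p − 1 as i → ∞ along the non-negative integers, where T_i is the activation time of frog i and S_{T_i}^i is the value at time T_i of the random walk attached to frog i. -/
open MeasureTheory ProbabilityTheory Filter
open scoped ENNReal NNReal Topology

/-- The trajectory attached to the frog starting at site `i`:
`frogS X ω i n = ∑_{k=1}^n X_k^i(ω)` is its displacement `n` steps after its activation. -/
def frogS {Ω : Type*} (X : ℤ → ℕ → Ω → ℤ) (ω : Ω) (i : ℤ) (n : ℕ) : ℤ :=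
  ∑ k ∈ Finset.Icc 1 n, X i k ω

/-- First time (as an element of `ℕ∞`) at which the walk attached to frog `j`
(which starts at `j`) visits site `i`. -/
noncomputable def hitTime (S : ℤ → ℕ → ℤ) (j i : ℤ) : ℕ∞ :=
  sInf {t : ℕ∞ | ∃ n : ℕ, t = n ∧ j + S j n = i}

/-- Activation time `T_i` of the frog initially at site `i`, in the frog model with one
active frog at `0` and one sleeping frog at every other site: since every activated frog
follows its attached trajectory from its activation time onwards, `T_i` is the
first-passage-percolation infimum over activation chains `0 = c 0, c 1, …, c m = i` of the
sums of the successive hitting times.  This is the (unique, canonical) solution of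
`T_0 = 0`, `T_i = inf {n ∈ ℕ : ∃ j, T_j ≤ n ∧ j + S^j_{n - T_j} = i}`. -/
noncomputable def frogT (S : ℤ → ℕ → ℤ) (i : ℤ) : ℕ∞ :=
  sInf {t : ℕ∞ | ∃ (m : ℕ) (c : ℕ → ℤ), c 0 = 0 ∧ c m = i ∧
    t = ∑ l ∈ Finset.range m, hitTime S (c l) (c (l + 1))}

/-- Activation times `T_i⁺` in the frog model without negative frogs (one active frog at `0`,
one sleeping frog at every positive integer site and no frogs at negative sites):
only activation chains staying in the non-negative integers are available. -/
noncomputable def frogTplus (S : ℤ → ℕ → ℤ) (i : ℤ) : ℕ∞ :=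
  sInf {t : ℕ∞ | ∃ (m : ℕ) (c : ℕ → ℤ), c 0 = 0 ∧ c m = i ∧ (∀ l ≤ m, 0 ≤ c l) ∧
    t = ∑ l ∈ Finset.range m, hitTime S (c l) (c (l + 1))}

/-- Position `Z_n^i` of frog `i` at time `n`: it sits at `i` until its activation time and
then follows its attached trajectory. -/
noncomputable def frogZ (S : ℤ → ℕ → ℤ) (n : ℕ) (i : ℤ) : ℤ :=
  if frogT S i ≤ (n : ℕ∞) then i + S i (n - (frogT S i).toNat) else i

/-- `M_n`, the maximum of the positions of the active frogs at time `n`. -/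
noncomputable def frogM (S : ℤ → ℕ → ℤ) (n : ℕ) : ℤ :=
  sSup {z : ℤ | ∃ i : ℤ, frogT S i ≤ (n : ℕ∞) ∧ frogZ S n i = z}

/-- `m_n`, the minimum of the positions of the active frogs at time `n`. -/
noncomputable def frogm (S : ℤ → ℕ → ℤ) (n : ℕ) : ℤ :=
  sInf {z : ℤ | ∃ i : ℤ, frogT S i ≤ (n : ℕ∞) ∧ frogZ S n i = z}

/-- The set `A_n` of active frogs at time `n`, as a `Finset`.  (Activation spreads with
speed at most one, so all active frogs lie in `[-n, n]`.) -/
noncomputable def frogA (S : ℤ → ℕ → ℤ) (n : ℕ) : Finset ℤ :=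
  (Finset.Icc (-(n : ℤ)) n).filter fun i => frogT S i ≤ (n : ℕ∞)

/-- The random input of the frog model on `ℤ` with drift parameter `p`: an i.i.d. family
`(X_k^i)_{i ∈ ℤ, k ∈ ℕ}` with `P(X_k^i = 1) = p = 1 - P(X_k^i = -1)`. -/
structure IsFrogModel {Ω : Type*} [MeasurableSpace Ω] (P : Measure Ω)
    (X : ℤ → ℕ → Ω → ℤ) (p : ℝ) : Prop where
  meas : ∀ i k, Measurable (X i k)
  indep : iIndepFun (fun ik : ℤ × ℕ => X ik.1 ik.2) P
  prob_one : ∀ i k, P {ω | X i k ω = 1} = ENNReal.ofReal p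
  prob_neg_one : ∀ i k, P {ω | X i k ω = -1} = ENNReal.ofReal (1 - p)

/-! ### Auxiliary lemmas -/

section Aux

lemma iIndepFun_precompose {Ω ι ι' β : Type*} [MeasurableSpace Ω] {P : Measure Ω}
    [mβ : MeasurableSpace β] {f : ι → Ω → β}
    (h : iIndepFun f P) (g : ι' → ι) (hg : Function.Injective g) :
    iIndepFun (fun k => f (g k)) P := by
  classical
  rw [iIndepFun_iff_measure_inter_preimage_eq_mul] at h ⊢
  intro S sets hsets
  set sets' : ι → Set β := fun i =>
    if hi : ∃ k ∈ S, g k = i then sets hi.choose else Set.univ with hsets'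
  have key : ∀ k ∈ S, sets' (g k) = sets k := by
    intro k hk
    have hi : ∃ k' ∈ S, g k' = g k := ⟨k, hk, rfl⟩
    have : hi.choose = k := hg hi.choose_spec.2
    simp only [hsets', dif_pos hi, this]
  have hmeas : ∀ i ∈ S.map ⟨g, hg⟩, MeasurableSet (sets' i) := by
    intro i hi
    rw [Finset.mem_map] at hi
    obtain ⟨k, hk, rfl⟩ := hi
    simp only [Function.Embedding.coeFn_mk]
    rw [key k hk]
    exact hsets k hk
  have := h (S.map ⟨g, hg⟩) hmeas
  rw [Finset.prod_map] at this
  have hInter : (⋂ i ∈ S.map ⟨g, hg⟩, f i ⁻¹' sets' i) = ⋂ k ∈ S, f (g k) ⁻¹' sets k := by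
    ext ω
    simp only [Set.mem_iInter, Finset.mem_map, Function.Embedding.coeFn_mk, forall_exists_index]
    constructor
    · intro hh k hk
      have := hh (g k) k ⟨hk, rfl⟩
      rwa [key k hk] at this
    · rintro hh i k ⟨hk, rfl⟩
      rw [key k hk]
      exact hh k hk
  rw [hInter] at this
  rw [this]
  refine Finset.prod_congr rfl fun k hk => ?_
  rw [Function.Embedding.coeFn_mk, key k hk]

lemma step_exp_integral {Ω : Type*} [MeasurableSpace Ω] (P : Measure Ω) [IsProbabilityMeasure P]
    (Y : Ω → ℝ) (hY : Measurable Y) (q : ℝ) (hq0 : 0 ≤ q) (hq1 : q ≤ 1)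
    (h1 : P {ω | Y ω = 1} = ENNReal.ofReal q)
    (h2 : P {ω | Y ω = -1} = ENNReal.ofReal (1 - q)) (t : ℝ) :
    Integrable (fun ω => Real.exp (t * Y ω)) P ∧
      mgf Y P t = q * Real.exp t + (1 - q) * Real.exp (-t) := by
  have hA : MeasurableSet {ω | Y ω = 1} := hY (measurableSet_singleton 1)
  have hB : MeasurableSet {ω | Y ω = -1} := hY (measurableSet_singleton (-1))
  have hdis : Disjoint {ω | Y ω = 1} {ω | Y ω = -1} := by
    rw [Set.disjoint_left]
    intro ω hω1 hω2
    simp only [Set.mem_setOf_eq] at hω1 hω2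
    rw [hω1] at hω2; norm_num at hω2
  have hunion : P ({ω | Y ω = 1} ∪ {ω | Y ω = -1}) = 1 := by
    rw [measure_union hdis hB, h1, h2, ← ENNReal.ofReal_add hq0 (by linarith)]
    norm_num
  have hcompl : P ({ω | Y ω = 1} ∪ {ω | Y ω = -1})ᶜ = 0 := by
    rw [measure_compl (hA.union hB) (measure_ne_top _ _), hunion, measure_univ, tsub_self]
  have hae : ∀ᵐ ω ∂P, Y ω = 1 ∨ Y ω = -1 := by
    have := mem_ae_iff.mpr hcompl
    filter_upwards [this] with ω hω
    exact hω
  set g : Ω → ℝ := fun ω =>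
    Real.exp (-t) + (Real.exp t - Real.exp (-t)) *
      Set.indicator {ω | Y ω = 1} (fun _ => (1 : ℝ)) ω with hg
  have heq : (fun ω => Real.exp (t * Y ω)) =ᵐ[P] g := by
    filter_upwards [hae] with ω hω
    rcases hω with h | h
    · have hmem : ω ∈ {ω | Y ω = 1} := h
      simp only [hg, Set.indicator_of_mem hmem, h, mul_one]
      ring
    · have hmem : ω ∉ {ω | Y ω = 1} := by
        simp only [Set.mem_setOf_eq, h]; norm_num
      simp only [hg, Set.indicator_of_notMem hmem, h, mul_neg_one, mul_zero, add_zero]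
  have hgint : Integrable g P :=
    (integrable_const _).add (((integrable_const (1 : ℝ)).indicator hA).const_mul _)
  have hint : Integrable (fun ω => Real.exp (t * Y ω)) P := hgint.congr heq.symm
  refine ⟨hint, ?_⟩
  have : mgf Y P t = ∫ ω, g ω ∂P := integral_congr_ae heq
  rw [this]
  rw [hg]
  rw [integral_add (integrable_const _) (((integrable_const (1 : ℝ)).indicator hA).const_mul _),
    integral_const, integral_const_mul, integral_indicator_const (1 : ℝ) hA, measureReal_def,
    measureReal_def, h1,
    ENNReal.toReal_ofReal hq0, measure_univ]
  simp only [ENNReal.toReal_one, smul_eq_mul, one_mul, mul_one]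
  ring

lemma chernoff_tail {Ω : Type*} [MeasurableSpace Ω] (P : Measure Ω) [IsProbabilityMeasure P]
    (W : ℕ → Ω → ℝ) (hmeas : ∀ k, Measurable (W k))
    (hindep : iIndepFun W P)
    (q : ℝ) (hq0 : 0 ≤ q) (hq1 : q ≤ 1)
    (h1 : ∀ k, P {ω | W k ω = 1} = ENNReal.ofReal q)
    (h2 : ∀ k, P {ω | W k ω = -1} = ENNReal.ofReal (1 - q))
    (ε : ℝ) (hε : 0 < ε) (hε1 : ε ≤ 1) (n : ℕ) :
    P {ω | ((2*q - 1) + ε) * n ≤ ∑ k ∈ Finset.Icc 1 n, W k ω}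
      ≤ ENNReal.ofReal (Real.exp (-(ε^2/8)) ^ n) := by
  set t := ε / 6 with htdef
  have ht0 : 0 < t := by positivity
  have ht1 : t ≤ 1 := by rw [htdef]; linarith
  have hstep := fun k => step_exp_integral P (W k) (hmeas k) q hq0 hq1 (h1 k) (h2 k) t
  have hmgf_sum : mgf (∑ k ∈ Finset.Icc 1 n, W k) P t
      = (q * Real.exp t + (1 - q) * Real.exp (-t)) ^ n := by
    rw [hindep.mgf_sum hmeas, Finset.prod_congr rfl (fun k _ => (hstep k).2), Finset.prod_const,
      Nat.card_Icc]
    norm_num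
  have hint_sum : Integrable (fun ω => Real.exp (t * (∑ k ∈ Finset.Icc 1 n, W k) ω)) P :=
    hindep.integrable_exp_mul_sum hmeas (fun k _ => (hstep k).1)
  have hcher := measure_ge_le_exp_mul_mgf (μ := P) (X := ∑ k ∈ Finset.Icc 1 n, W k)
      (((2*q - 1) + ε) * n) ht0.le hint_sum
  rw [hmgf_sum] at hcher
  have expb : ∀ x : ℝ, |x| ≤ 1 → Real.exp x ≤ 1 + x + (3/4) * x^2 := by
    intro x hx
    have hb := Real.exp_bound hx (n := 2) (by norm_num)
    have h2' : |Real.exp x - (1 + x)| ≤ |x| ^ 2 * (3 / 4) := by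
      convert hb using 2
      · simp [Finset.sum_range_succ]
      · norm_num [Nat.factorial]
    have := (abs_sub_le_iff.mp h2').1
    have hxx : |x| ^ 2 = x ^ 2 := sq_abs x
    linarith [this, hxx.le, hxx.ge]
  have hstepb : q * Real.exp t + (1 - q) * Real.exp (-t)
      ≤ Real.exp ((2*q - 1) * t + (3/4) * t^2) := by
    have e1 : Real.exp t ≤ 1 + t + (3/4) * t^2 := expb t (by rw [abs_of_pos ht0]; exact ht1)
    have e2 : Real.exp (-t) ≤ 1 + (-t) + (3/4) * (-t)^2 := by
      refine expb (-t) ?_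
      rw [abs_neg, abs_of_pos ht0]; exact ht1
    have hq1' : 0 ≤ 1 - q := by linarith
    have := Real.add_one_le_exp ((2*q - 1) * t + (3/4) * t^2)
    nlinarith [mul_le_mul_of_nonneg_left e1 hq0, mul_le_mul_of_nonneg_left e2 hq1']
  have hbase0 : 0 ≤ q * Real.exp t + (1 - q) * Real.exp (-t) :=
    add_nonneg (mul_nonneg hq0 (Real.exp_pos _).le)
      (mul_nonneg (by linarith) (Real.exp_pos _).le)
  have key : Real.exp (-t * (((2*q - 1) + ε) * n))
        * (q * Real.exp t + (1 - q) * Real.exp (-t)) ^ n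
      ≤ Real.exp (-(ε^2/8)) ^ n := by
    calc Real.exp (-t * (((2*q - 1) + ε) * n))
          * (q * Real.exp t + (1 - q) * Real.exp (-t)) ^ n
        ≤ Real.exp (-t * (((2*q - 1) + ε) * n))
          * Real.exp ((2*q - 1) * t + (3/4) * t^2) ^ n :=
          mul_le_mul_of_nonneg_left (pow_le_pow_left₀ hbase0 hstepb n) (Real.exp_pos _).le
      _ = (Real.exp (-(t * ((2*q - 1) + ε)) + ((2*q - 1) * t + (3/4) * t^2))) ^ n := by
          rw [show -t * (((2*q - 1) + ε) * n) = (n : ℝ) * (-(t * ((2*q - 1) + ε))) by ring,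
            Real.exp_nat_mul, ← mul_pow, ← Real.exp_add]
      _ ≤ Real.exp (-(ε^2/8)) ^ n := by
          refine pow_le_pow_left₀ (Real.exp_pos _).le (Real.exp_le_exp.mpr ?_) n
          rw [htdef]; nlinarith [sq_nonneg ε]
  have hfin : (P {ω | ((2*q - 1) + ε) * n ≤ (∑ k ∈ Finset.Icc 1 n, W k) ω}).toReal
      ≤ Real.exp (-(ε^2/8)) ^ n := le_trans hcher key
  rw [ENNReal.le_ofReal_iff_toReal_le (measure_ne_top _ _) (by positivity)]
  simpa only [Finset.sum_apply] using hfin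

lemma ivt_seq (f : ℕ → ℤ) (hf : ∀ k, f (k + 1) = f k + 1 ∨ f (k + 1) = f k - 1)
    (v : ℤ) (n : ℕ) (h0 : f 0 ≤ v) (hn : v ≤ f n) : ∃ k, f k = v := by
  induction n with
  | zero => exact ⟨0, le_antisymm h0 hn⟩
  | succ n ih =>
    by_cases h : v ≤ f n
    · exact ih h
    · push_neg at h
      rcases hf n with h' | h'
      · exact ⟨n + 1, by omega⟩
      · omega

lemma hitTime_le {S : ℤ → ℕ → ℤ} {j i : ℤ} {n : ℕ} (h : j + S j n = i) :
    hitTime S j i ≤ (n : ℕ∞) :=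
  sInf_le ⟨n, rfl, h⟩

lemma frogT_le_hitTime (S : ℤ → ℕ → ℤ) (i : ℤ) : frogT S i ≤ hitTime S 0 i := by
  refine sInf_le ⟨1, fun l => if l = 0 then 0 else i, by simp, by simp, ?_⟩
  simp [Finset.sum_range_one]

lemma hitTime_ge {S : ℤ → ℕ → ℤ} {j : ℤ} (hb : ∀ n, (S j n).natAbs ≤ n) (i : ℤ) :
    ((i - j).natAbs : ℕ∞) ≤ hitTime S j i := by
  refine le_sInf ?_
  rintro t ⟨n, rfl, hn⟩
  have hS : S j n = i - j := by omega
  have : (i - j).natAbs ≤ n := by rw [← hS]; exact hb n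
  exact_mod_cast this

lemma frogT_ge {S : ℤ → ℕ → ℤ} (hb : ∀ j n, (S j n).natAbs ≤ n) (i : ℤ) :
    (i.natAbs : ℕ∞) ≤ frogT S i := by
  refine le_sInf ?_
  rintro t ⟨m, c, hc0, hcm, rfl⟩
  have habs : |∑ l ∈ Finset.range m, (c (l + 1) - c l)|
      ≤ ∑ l ∈ Finset.range m, |c (l + 1) - c l| :=
    Finset.abs_sum_le_sum_abs _ _
  rw [Finset.sum_range_sub c, hcm, hc0, sub_zero] at habs
  have hnat : i.natAbs ≤ ∑ l ∈ Finset.range m, (c (l + 1) - c l).natAbs := by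
    have : (i.natAbs : ℤ) ≤ ((∑ l ∈ Finset.range m, (c (l + 1) - c l).natAbs : ℕ) : ℤ) := by
      push_cast [Int.natCast_natAbs]
      exact habs
    exact_mod_cast this
  calc (i.natAbs : ℕ∞) ≤ ((∑ l ∈ Finset.range m, (c (l + 1) - c l).natAbs : ℕ) : ℕ∞) := by
        exact_mod_cast hnat
    _ = ∑ l ∈ Finset.range m, (((c (l + 1) - c l).natAbs : ℕ) : ℕ∞) := by push_cast; rfl
    _ ≤ ∑ l ∈ Finset.range m, hitTime S (c l) (c (l + 1)) :=
        Finset.sum_le_sum fun l _ => hitTime_ge (hb (c l)) _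

end Aux

/-- **Displacement at activation.**
In the frog model with drift `p ∈ [1/2, 1]`, almost surely `S_{T_i}^i / T_i → 2p - 1` as
`i → ∞` along the non-negative integers, where `T_i` is the (a.s. finite) activation time
of frog `i` and `S_{T_i}^i` the value of its attached walk at that time. -/
theorem frog_walk_at_activation
    {Ω : Type*} [MeasurableSpace Ω] (P : Measure Ω) [IsProbabilityMeasure P]
    (X : ℤ → ℕ → Ω → ℤ) (p : ℝ) (hmodel : IsFrogModel P X p)
    (hp : 1 / 2 ≤ p) (hp1 : p ≤ 1) :
    ∀ᵐ ω ∂P, Tendsto (fun i : ℕ =>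
        (frogS X ω i ((frogT (frogS X ω) i).toNat) : ℝ) / ((frogT (frogS X ω) i).toNat : ℝ))
      atTop (𝓝 (2 * p - 1)) := by
  classical
  have hp0 : (0:ℝ) ≤ p := by linarith
  have hp0' : (0:ℝ) ≤ 1 - p := by linarith
  set W : ℤ → ℕ → Ω → ℝ := fun i k ω => ((X i k ω : ℤ) : ℝ) with hW
  have hWmeas : ∀ (i : ℤ) (k : ℕ), Measurable (W i k) := fun i k =>
    measurable_from_top.comp (hmodel.meas i k)
  have hVmeas : ∀ (i : ℤ) (k : ℕ), Measurable (fun ω => -(W i k ω)) := fun i k =>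
    (hWmeas i k).neg
  have hWindep : ∀ i : ℤ, iIndepFun (fun k => W i k) P := by
    intro i
    have h1 : iIndepFun (fun k : ℕ => X i k) P :=
      iIndepFun_precompose hmodel.indep (fun k : ℕ => ((i, k) : ℤ × ℕ))
        (fun a b hab => by simpa using congrArg Prod.snd hab)
    exact h1.comp (fun _ => (Int.cast : ℤ → ℝ)) (fun _ => measurable_from_top)
  have hVindep : ∀ i : ℤ, iIndepFun (fun k ω => -(W i k ω)) P :=
    fun i => (hWindep i).comp (fun _ => (fun x : ℝ => -x)) (fun _ => measurable_neg)
  have hW1 : ∀ (i : ℤ) (k : ℕ), P {ω | W i k ω = 1} = ENNReal.ofReal p := by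
    intro i k
    have hset : {ω | W i k ω = 1} = {ω | X i k ω = 1} := by
      ext ω; simp only [hW, Set.mem_setOf_eq]
      exact_mod_cast Iff.rfl
    rw [hset, hmodel.prob_one]
  have hWneg : ∀ (i : ℤ) (k : ℕ), P {ω | W i k ω = -1} = ENNReal.ofReal (1 - p) := by
    intro i k
    have hset : {ω | W i k ω = -1} = {ω | X i k ω = -1} := by
      ext ω; simp only [hW, Set.mem_setOf_eq]
      exact_mod_cast Iff.rfl
    rw [hset, hmodel.prob_neg_one]
  have hV1 : ∀ (i : ℤ) (k : ℕ), P {ω | -(W i k ω) = 1} = ENNReal.ofReal (1 - p) := by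
    intro i k
    have hset : {ω | -(W i k ω) = 1} = {ω | W i k ω = -1} := by
      ext ω; simp only [Set.mem_setOf_eq, neg_eq_iff_eq_neg]
    rw [hset, hWneg]
  have hVneg : ∀ (i : ℤ) (k : ℕ), P {ω | -(W i k ω) = -1} = ENNReal.ofReal (1 - (1 - p)) := by
    intro i k
    have hset : {ω | -(W i k ω) = -1} = {ω | W i k ω = 1} := by
      ext ω; simp only [Set.mem_setOf_eq, neg_eq_iff_eq_neg, neg_neg]
    rw [hset, hW1]
    norm_num
  -- Chernoff bound on the two-sided tail of each frog's walk
  have hEb : ∀ (m i n : ℕ),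
      P {ω | (1/((m:ℝ)+1)) * n < |((frogS X ω i n : ℤ) : ℝ) - (2*p-1)*n|}
        ≤ ENNReal.ofReal (2 * (Real.exp (-((1/((m:ℝ)+1))^2/8)))^n) := by
    intro m i n
    have hεm0 : (0:ℝ) < 1/((m:ℝ)+1) := by positivity
    have hεm1 : (1:ℝ)/((m:ℝ)+1) ≤ 1 := by
      rw [div_le_one (by positivity)]
      simp [Nat.cast_nonneg]
    have hup := chernoff_tail P (fun k => W i k) (hWmeas i) (hWindep i) p hp0 hp1
      (hW1 i) (hWneg i) (1/((m:ℝ)+1)) hεm0 hεm1 n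
    have hdown := chernoff_tail P (fun k ω => -(W i k ω)) (hVmeas i) (hVindep i)
      (1-p) hp0' (by linarith) (hV1 i) (hVneg i) (1/((m:ℝ)+1)) hεm0 hεm1 n
    have hsub : {ω | (1/((m:ℝ)+1)) * n < |((frogS X ω i n : ℤ) : ℝ) - (2*p-1)*n|}
        ⊆ {ω | ((2*p - 1) + 1/((m:ℝ)+1)) * n ≤ ∑ k ∈ Finset.Icc 1 n, W i k ω}
          ∪ {ω | ((2*(1-p) - 1) + 1/((m:ℝ)+1)) * n ≤ ∑ k ∈ Finset.Icc 1 n, -(W i k ω)} := by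
      intro ω hω
      simp only [Set.mem_setOf_eq] at hω
      have hcast : ((frogS X ω i n : ℤ) : ℝ) = ∑ k ∈ Finset.Icc 1 n, W i k ω := by
        rw [frogS]; push_cast; rfl
      rw [hcast] at hω
      have hsumneg : ∑ k ∈ Finset.Icc 1 n, -(W i k ω)
          = -∑ k ∈ Finset.Icc 1 n, W i k ω := by simp
      rcases lt_abs.mp hω with h | h
      · left
        simp only [Set.mem_setOf_eq]
        have he : ((2*p - 1) + 1/((m:ℝ)+1)) * n = (2*p-1)*n + (1/((m:ℝ)+1)) * n := by ring
        rw [he]; linarith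
      · right
        simp only [Set.mem_setOf_eq, hsumneg]
        have he : ((2*(1-p) - 1) + 1/((m:ℝ)+1)) * n = -((2*p-1)*n) + (1/((m:ℝ)+1)) * n := by
          ring
        rw [he]; linarith
    calc P {ω | (1/((m:ℝ)+1)) * n < |((frogS X ω i n : ℤ) : ℝ) - (2*p-1)*n|}
        ≤ P ({ω | ((2*p - 1) + 1/((m:ℝ)+1)) * n ≤ ∑ k ∈ Finset.Icc 1 n, W i k ω}
          ∪ {ω | ((2*(1-p) - 1) + 1/((m:ℝ)+1)) * n ≤ ∑ k ∈ Finset.Icc 1 n, -(W i k ω)}) :=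
          measure_mono hsub
      _ ≤ P {ω | ((2*p - 1) + 1/((m:ℝ)+1)) * n ≤ ∑ k ∈ Finset.Icc 1 n, W i k ω}
          + P {ω | ((2*(1-p) - 1) + 1/((m:ℝ)+1)) * n ≤ ∑ k ∈ Finset.Icc 1 n, -(W i k ω)} :=
          measure_union_le _ _
      _ ≤ ENNReal.ofReal ((Real.exp (-((1/((m:ℝ)+1))^2/8)))^n)
          + ENNReal.ofReal ((Real.exp (-((1/((m:ℝ)+1))^2/8)))^n) := add_le_add hup hdown
      _ = ENNReal.ofReal (2 * (Real.exp (-((1/((m:ℝ)+1))^2/8)))^n) := by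
          rw [← ENNReal.ofReal_add (by positivity) (by positivity)]
          ring_nf
  -- Borel–Cantelli for the deviation events
  have hBC : ∀ m : ℕ, ∀ᵐ ω ∂P, ∀ᶠ i : ℕ in atTop, ∀ n : ℕ, i ≤ n →
      |((frogS X ω i n : ℤ) : ℝ) - (2*p-1)*n| ≤ (1/((m:ℝ)+1)) * n := by
    intro m
    set r : ℝ := Real.exp (-((1/((m:ℝ)+1))^2/8)) with hrdef
    have hr0 : 0 < r := Real.exp_pos _
    have hr1 : r < 1 := by
      rw [hrdef, Real.exp_lt_one_iff]
      have : (0:ℝ) < (1/((m:ℝ)+1))^2/8 := by positivity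
      linarith
    set Bad : ℕ → Set Ω := fun i =>
      ⋃ j : ℕ, {ω | (1/((m:ℝ)+1)) * (((i+j : ℕ)) : ℝ)
        < |((frogS X ω i (i+j) : ℤ) : ℝ) - (2*p-1)*(((i+j : ℕ)) : ℝ)|}
      with hBadDef
    have hBadle : ∀ i, P (Bad i) ≤ ENNReal.ofReal ((2 * (1 - r)⁻¹) * r^i) := by
      intro i
      have hsummable : Summable (fun j : ℕ => 2 * r^(i+j)) := by
        simp_rw [pow_add, ← mul_assoc]
        exact (summable_geometric_of_lt_one hr0.le hr1).mul_left _
      calc P (Bad i)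
          ≤ ∑' j : ℕ, P {ω | (1/((m:ℝ)+1)) * (((i+j : ℕ)) : ℝ)
              < |((frogS X ω i (i+j) : ℤ) : ℝ) - (2*p-1)*(((i+j : ℕ)) : ℝ)|} :=
            measure_iUnion_le _
        _ ≤ ∑' j : ℕ, ENNReal.ofReal (2 * r^(i+j)) :=
            ENNReal.tsum_le_tsum (fun j => hEb m i (i+j))
        _ = ENNReal.ofReal (∑' j : ℕ, 2 * r^(i+j)) :=
            (ENNReal.ofReal_tsum_of_nonneg (fun j => by positivity) hsummable).symm
        _ = ENNReal.ofReal ((2 * (1 - r)⁻¹) * r^i) := by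
            congr 1
            simp_rw [pow_add, ← mul_assoc]
            rw [tsum_mul_left, tsum_geometric_of_lt_one hr0.le hr1]
            ring
    have htot : (∑' i : ℕ, P (Bad i)) ≠ ⊤ := by
      have hsum2 : Summable (fun i : ℕ => (2 * (1 - r)⁻¹) * r^i) :=
        (summable_geometric_of_lt_one hr0.le hr1).mul_left _
      refine ne_top_of_le_ne_top (ENNReal.ofReal_ne_top
        (r := ∑' i : ℕ, (2 * (1 - r)⁻¹) * r^i)) ?_
      calc (∑' i : ℕ, P (Bad i)) ≤ ∑' i : ℕ, ENNReal.ofReal ((2 * (1 - r)⁻¹) * r^i) :=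
            ENNReal.tsum_le_tsum hBadle
        _ = ENNReal.ofReal (∑' i : ℕ, (2 * (1 - r)⁻¹) * r^i) :=
            (ENNReal.ofReal_tsum_of_nonneg (fun i => mul_nonneg
              (mul_nonneg (by norm_num) (inv_nonneg.mpr (by linarith)))
              (pow_nonneg hr0.le i)) hsum2).symm
    filter_upwards [MeasureTheory.ae_eventually_notMem htot] with ω hω
    filter_upwards [hω] with i hi n hn
    obtain ⟨j, rfl⟩ : ∃ j, n = i + j := ⟨n - i, by omega⟩
    have hnot : ω ∉ {ω | (1/((m:ℝ)+1)) * (((i+j : ℕ)) : ℝ)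
        < |((frogS X ω i (i+j) : ℤ) : ℝ) - (2*p-1)*(((i+j : ℕ)) : ℝ)|} := by
      intro hmem
      exact hi (Set.mem_iUnion.mpr ⟨j, hmem⟩)
    simpa [not_lt] using hnot
  -- growth of the walk of frog 0 (needed when p > 1/2)
  have hgrow : ∀ᵐ ω ∂P, (1/2 < p) →
      ∀ᶠ n : ℕ in atTop, ((2*p-1)/2) * n < ((frogS X ω 0 n : ℤ) : ℝ) := by
    by_cases hc : 1/2 < p
    · have hε00 : (0:ℝ) < (2*p-1)/2 := by linarith
      have hε01 : (2*p-1)/2 ≤ 1 := by linarith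
      set r : ℝ := Real.exp (-(((2*p-1)/2)^2/8)) with hrdef
      have hr0 : 0 < r := Real.exp_pos _
      have hr1 : r < 1 := by
        rw [hrdef, Real.exp_lt_one_iff]
        have : (0:ℝ) < ((2*p-1)/2)^2/8 := by positivity
        linarith
      set A : ℕ → Set Ω := fun n =>
        {ω | ((2*(1-p) - 1) + (2*p-1)/2) * n ≤ ∑ k ∈ Finset.Icc 1 n, -(W 0 k ω)} with hADef
      have hAle : ∀ n, P (A n) ≤ ENNReal.ofReal (r^n) := fun n =>
        chernoff_tail P (fun k ω => -(W 0 k ω)) (hVmeas 0) (hVindep 0)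
          (1-p) hp0' (by linarith) (hV1 0) (hVneg 0) ((2*p-1)/2) hε00 hε01 n
      have htot : (∑' n : ℕ, P (A n)) ≠ ⊤ := by
        refine ne_top_of_le_ne_top (ENNReal.ofReal_ne_top (r := ∑' n : ℕ, r^n)) ?_
        calc (∑' n : ℕ, P (A n)) ≤ ∑' n : ℕ, ENNReal.ofReal (r^n) :=
              ENNReal.tsum_le_tsum hAle
          _ = ENNReal.ofReal (∑' n : ℕ, r^n) :=
              (ENNReal.ofReal_tsum_of_nonneg (fun n => by positivity)
                (summable_geometric_of_lt_one hr0.le hr1)).symm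
      filter_upwards [MeasureTheory.ae_eventually_notMem htot] with ω hω _
      filter_upwards [hω] with n hn
      simp only [hADef, Set.mem_setOf_eq, not_le] at hn
      have hcast : ∑ k ∈ Finset.Icc 1 n, -(W 0 k ω) = -((frogS X ω 0 n : ℤ) : ℝ) := by
        rw [frogS]; push_cast; simp; rfl
      rw [hcast] at hn
      have he : ((2*(1-p) - 1) + (2*p-1)/2) * (n:ℝ) = -(((2*p-1)/2) * n) := by ring
      rw [he] at hn
      linarith
    · filter_upwards with ω
      exact fun h => absurd h hc
  -- almost surely all steps are ±1
  have hsteps : ∀ᵐ ω ∂P, ∀ (j : ℤ) (k : ℕ), X j k ω = 1 ∨ X j k ω = -1 := by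
    rw [ae_all_iff]
    intro j
    rw [ae_all_iff]
    intro k
    have hA : MeasurableSet {ω | X j k ω = 1} := hmodel.meas j k (measurableSet_singleton 1)
    have hB : MeasurableSet {ω | X j k ω = -1} :=
      hmodel.meas j k (measurableSet_singleton (-1))
    have hdis : Disjoint {ω | X j k ω = 1} {ω | X j k ω = -1} := by
      rw [Set.disjoint_left]
      intro ω hω1 hω2
      simp only [Set.mem_setOf_eq] at hω1 hω2
      rw [hω1] at hω2
      norm_num at hω2
    have hunion : P ({ω | X j k ω = 1} ∪ {ω | X j k ω = -1}) = 1 := by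
      rw [measure_union hdis hB, hmodel.prob_one, hmodel.prob_neg_one,
        ← ENNReal.ofReal_add hp0 hp0']
      norm_num
    have hcompl : P ({ω | X j k ω = 1} ∪ {ω | X j k ω = -1})ᶜ = 0 := by
      rw [measure_compl (hA.union hB) (measure_ne_top _ _), hunion, measure_univ, tsub_self]
    filter_upwards [mem_ae_iff.mpr hcompl] with ω hω
    exact hω
  -- put everything together
  filter_upwards [ae_all_iff.mpr hBC, hgrow, hsteps] with ω hdev hgrow hsteps
  have hb : ∀ (j : ℤ) (n : ℕ), (frogS X ω j n).natAbs ≤ n := by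
    intro j n
    have habs : |frogS X ω j n| ≤ (n:ℤ) := by
      calc |frogS X ω j n| ≤ ∑ k ∈ Finset.Icc 1 n, |X j k ω| :=
            Finset.abs_sum_le_sum_abs _ _
        _ = ∑ k ∈ Finset.Icc 1 n, 1 := Finset.sum_congr rfl (fun k _ => by
            rcases hsteps j k with h | h <;> simp [h])
        _ = (n:ℤ) := by simp [Nat.card_Icc]
    rw [Int.abs_eq_natAbs] at habs
    exact_mod_cast habs
  rw [Metric.tendsto_atTop]
  intro ε hε
  obtain ⟨m, hm⟩ := exists_nat_one_div_lt hε
  obtain ⟨I, hI⟩ := eventually_atTop.mp (hdev m)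
  refine ⟨max I 1, fun i hi => ?_⟩
  have hIi : I ≤ i := le_trans (le_max_left _ _) hi
  have h1i : 1 ≤ i := le_trans (le_max_right _ _) hi
  by_cases hfin : frogT (frogS X ω) i = ⊤
  · -- impossible unless p = 1/2, in which case the value is 0 = 2p - 1
    have hph : ¬ (1/2 < p) := by
      intro hc
      obtain ⟨N, hN⟩ := eventually_atTop.mp (hgrow hc)
      obtain ⟨n₀, hn₀⟩ := exists_nat_ge ((i : ℝ) / ((2*p-1)/2))
      set n : ℕ := max N n₀ with hn
      have hc2 : (0:ℝ) < (2*p-1)/2 := by linarith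
      have hSn : (i:ℝ) ≤ ((2*p-1)/2) * n := by
        rw [div_le_iff₀ hc2] at hn₀
        calc (i:ℝ) ≤ (n₀:ℝ) * ((2*p-1)/2) := hn₀
          _ ≤ (n:ℝ) * ((2*p-1)/2) := by
              have : (n₀:ℝ) ≤ (n:ℝ) := Nat.cast_le.mpr (le_max_right _ _)
              nlinarith
          _ = ((2*p-1)/2) * n := mul_comm _ _
      have hlt : (i:ℝ) < ((frogS X ω 0 n : ℤ) : ℝ) :=
        lt_of_le_of_lt hSn (hN n (le_max_left _ _))
      have hle : (i:ℤ) ≤ frogS X ω 0 n := by exact_mod_cast hlt.le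
      have h0 : frogS X ω 0 0 ≤ (i:ℤ) := by
        simp [frogS]
      have hstep0 : ∀ k, frogS X ω 0 (k+1) = frogS X ω 0 k + 1 ∨
          frogS X ω 0 (k+1) = frogS X ω 0 k - 1 := by
        intro k
        have hsum : frogS X ω 0 (k+1) = frogS X ω 0 k + X 0 (k+1) ω := by
          rw [frogS, frogS, Finset.sum_Icc_succ_top (Nat.le_add_left 1 k)]
        rcases hsteps 0 (k+1) with h | h
        · left; rw [hsum, h]
        · right; rw [hsum, h]; ring
      obtain ⟨k, hk⟩ := ivt_seq (frogS X ω 0) hstep0 i n h0 hle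
      have hTle : frogT (frogS X ω) i ≤ (k : ℕ∞) :=
        le_trans (frogT_le_hitTime _ _) (hitTime_le (by rw [zero_add, hk]))
      rw [hfin] at hTle
      exact absurd hTle (by simp)
    have hpe : p = 1/2 := le_antisymm (not_lt.mp hph) hp
    have hzero : (2*p - 1 : ℝ) = 0 := by rw [hpe]; norm_num
    have : (frogT (frogS X ω) i).toNat = 0 := by rw [hfin]; rfl
    rw [this]
    have hS0 : frogS X ω i 0 = 0 := by simp [frogS]
    rw [hS0]
    simp only [Int.cast_zero, Nat.cast_zero, div_zero, Real.dist_eq, hzero]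
    simpa using hε
  · set t : ℕ := (frogT (frogS X ω) i).toNat with htdef
    have hti : i ≤ t := by
      have h1 := frogT_ge hb (i : ℤ)
      have h2 := ENat.toNat_le_toNat h1 hfin
      simpa using h2
    have htpos : (0:ℝ) < (t:ℝ) := by
      have : 0 < t := lt_of_lt_of_le h1i hti
      exact_mod_cast this
    have hdevt := hI i hIi t hti
    rw [Real.dist_eq]
    have heq : ((frogS X ω i t : ℤ) : ℝ) / t - (2*p-1)
        = (((frogS X ω i t : ℤ) : ℝ) - (2*p-1)*t) / t := by
      field_simp
    rw [heq, abs_div, abs_of_pos htpos]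
    calc |((frogS X ω i t : ℤ) : ℝ) - (2*p-1)*t| / t ≤ ((1/((m:ℝ)+1)) * t) / t := by
          gcongr
      _ = 1/((m:ℝ)+1) := by
          field_simp
      _ < ε := hm
end

section
/- In the frog model with drift parameter p ∈ (1/2, 1), almost surely (S_{T_i}^i − i) / T_i converges to 2p − 1 − v_max as i → ∞ along the non-negative integers, where v_max is the speed of the maximum. -/
open MeasureTheory ProbabilityTheory Filter
open scoped ENNReal NNReal Topology

namespace FrogAux

/-- The walk attached to each frog starts at `0` and moves by `±1` steps. -/
def Steps (S : ℤ → ℕ → ℤ) : Prop :=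
  (∀ j, S j 0 = 0) ∧ ∀ j n, S j (n + 1) = S j n + 1 ∨ S j (n + 1) = S j n - 1

lemma exists_mem_lt_of_sInf_lt {s : Set ℕ∞} {b : ℕ∞} (h : sInf s < b) : ∃ a ∈ s, a < b := by
  by_contra hc
  push_neg at hc
  exact absurd (le_sInf hc) (not_le.2 h)

variable {S : ℤ → ℕ → ℤ}

lemma natAbs_S_le (hS : Steps S) (j : ℤ) (n : ℕ) : (S j n).natAbs ≤ n := by
  induction n with
  | zero => simp [hS.1 j]
  | succ n ih =>
    rcases hS.2 j n with h | h <;> rw [h] <;>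
      calc _ ≤ (S j n).natAbs + 1 := by
              first
              | exact (Int.natAbs_add_le _ 1).trans (by simp)
              | exact (Int.natAbs_sub_le _ 1).trans (by simp)
           _ ≤ n + 1 := by omega

/-- Discrete intermediate value theorem for `±1` walks. -/
lemma ivt (f : ℕ → ℤ) (hf : ∀ s, f (s + 1) = f s + 1 ∨ f (s + 1) = f s - 1)
    (n : ℕ) (i : ℤ) (h0 : f 0 ≤ i) (hn : i ≤ f n) : ∃ s ≤ n, f s = i := by
  induction n with
  | zero => exact ⟨0, le_refl _, le_antisymm h0 hn⟩
  | succ n ih =>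
    by_cases h : i ≤ f n
    · obtain ⟨s, hs, hfs⟩ := ih h
      exact ⟨s, hs.trans (Nat.le_succ n), hfs⟩
    · push_neg at h
      refine ⟨n + 1, le_refl _, ?_⟩
      rcases hf n with h1 | h1 <;> omega

lemma hitTime_le {j i : ℤ} {n : ℕ} (h : j + S j n = i) : hitTime S j i ≤ (n : ℕ∞) :=
  sInf_le ⟨n, rfl, h⟩

lemma hitTime_ge (hS : Steps S) (j i : ℤ) : ((i - j).natAbs : ℕ∞) ≤ hitTime S j i := by
  refine le_sInf fun t ht => ?_
  obtain ⟨n, rfl, hn⟩ := ht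
  have : (i - j).natAbs = (S j n).natAbs := by omega
  rw [this]
  exact_mod_cast Nat.cast_le.2 (natAbs_S_le hS j n)

lemma hitTime_spec {j i : ℤ} (h : hitTime S j i ≠ ⊤) :
    ∃ n : ℕ, hitTime S j i = (n : ℕ∞) ∧ j + S j n = i := by
  obtain ⟨t, ht, htlt⟩ := exists_mem_lt_of_sInf_lt (lt_top_iff_ne_top.2 h)
  obtain ⟨n₀, rfl, hn₀⟩ := ht
  have hne : {n : ℕ | j + S j n = i}.Nonempty := ⟨n₀, hn₀⟩
  refine ⟨sInf {n : ℕ | j + S j n = i}, le_antisymm ?_ ?_, Nat.sInf_mem hne⟩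
  · exact hitTime_le (Nat.sInf_mem hne)
  · refine le_sInf fun t ht => ?_
    obtain ⟨n, rfl, hn⟩ := ht
    exact_mod_cast Nat.cast_le.2 (Nat.sInf_le hn)

lemma frogT_zero : frogT S 0 = 0 := by
  refine le_antisymm (sInf_le ⟨0, fun _ => 0, rfl, rfl, by simp⟩) zero_le

lemma frogT_ge (hS : Steps S) (i : ℤ) : (i.natAbs : ℕ∞) ≤ frogT S i := by
  refine le_sInf fun t ht => ?_
  obtain ⟨m, c, hc0, hcm, rfl⟩ := ht
  subst hcm
  have key : ∀ m : ℕ, (((c m - c 0).natAbs : ℕ∞)) ≤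
      ∑ l ∈ Finset.range m, hitTime S (c l) (c (l + 1)) := by
    intro m
    induction m with
    | zero => simp
    | succ m ih =>
      rw [Finset.sum_range_succ]
      have h1 : ((c (m+1) - c 0).natAbs : ℕ∞) ≤
          ((c m - c 0).natAbs : ℕ∞) + ((c (m+1) - c m).natAbs : ℕ∞) := by
        have : (c (m+1) - c 0).natAbs ≤ (c m - c 0).natAbs + (c (m+1) - c m).natAbs := by
          have := Int.natAbs_add_le (c m - c 0) (c (m+1) - c m)
          omega
        exact_mod_cast Nat.cast_le.2 this
      exact h1.trans (add_le_add ih (hitTime_ge hS _ _))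
  have := key m
  rwa [hc0, sub_zero] at this

/-- Extending an arbitrary activation chain by one hitting step. -/
lemma frogT_le_chain_add (m : ℕ) (c : ℕ → ℤ) (hc0 : c 0 = 0) (i : ℤ) :
    frogT S i ≤ (∑ l ∈ Finset.range m, hitTime S (c l) (c (l + 1))) + hitTime S (c m) i := by
  classical
  set c' : ℕ → ℤ := fun l => if l = m + 1 then i else c l with hc'
  have hagree : ∀ l ≤ m, c' l = c l := by
    intro l hl
    simp only [hc']
    rw [if_neg (by omega)]
  have hsum : ∑ l ∈ Finset.range (m + 1), hitTime S (c' l) (c' (l + 1)) =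
      (∑ l ∈ Finset.range m, hitTime S (c l) (c (l + 1))) + hitTime S (c m) i := by
    rw [Finset.sum_range_succ]
    congr 1
    · refine Finset.sum_congr rfl fun l hl => ?_
      rw [Finset.mem_range] at hl
      rw [hagree l (by omega), hagree (l + 1) (by omega)]
    · rw [hagree m (le_refl m)]
      simp [hc']
  rw [← hsum]
  exact sInf_le ⟨m + 1, c', by rw [hagree 0 (by omega)]; exact hc0, by simp [hc'], rfl⟩

lemma frogT_le_add (j i : ℤ) : frogT S i ≤ frogT S j + hitTime S j i := by
  by_cases hT : frogT S j = ⊤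
  · simp [hT]
  have hlt1 : frogT S j < frogT S j + 1 := (ENat.lt_add_one_iff hT).2 (le_refl _)
  obtain ⟨t, ht, htlt⟩ := exists_mem_lt_of_sInf_lt hlt1
  have htle : t ≤ frogT S j := (ENat.lt_add_one_iff hT).1 htlt
  obtain ⟨m, c, hc0, hcm, rfl⟩ := ht
  calc frogT S i ≤ (∑ l ∈ Finset.range m, hitTime S (c l) (c (l + 1))) + hitTime S (c m) i :=
        frogT_le_chain_add m c hc0 i
    _ ≤ frogT S j + hitTime S j i := add_le_add htle (by rw [hcm])

/-- Core chain-crossing lemma: if a chain from 0 reaches `j` with finite total time `t`,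
then every site `0 ≤ i ≤ j` is activated by time `t`, strictly earlier if `i < j`. -/
lemma chain_cross (hS : Steps S) :
    ∀ (m : ℕ) (c : ℕ → ℤ), c 0 = 0 →
      ∑ l ∈ Finset.range m, hitTime S (c l) (c (l + 1)) ≠ ⊤ →
      ∀ i : ℤ, 0 ≤ i →
        (i ≤ c m → frogT S i ≤ ∑ l ∈ Finset.range m, hitTime S (c l) (c (l + 1))) ∧
        (i < c m → frogT S i + 1 ≤ ∑ l ∈ Finset.range m, hitTime S (c l) (c (l + 1))) := by
  intro m
  induction m with
  | zero =>
    intro c hc0 _ i hi0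
    rw [hc0]
    constructor
    · intro hle
      have : i = 0 := le_antisymm hle hi0
      simp [this, frogT_zero]
    · intro hlt; omega
  | succ m ih =>
    intro c hc0 hfin i hi0
    rw [Finset.sum_range_succ] at hfin ⊢
    have hfin' : ∑ l ∈ Finset.range m, hitTime S (c l) (c (l + 1)) ≠ ⊤ := by
      intro h; rw [h] at hfin; simp at hfin
    have hfinH : hitTime S (c m) (c (m + 1)) ≠ ⊤ := by
      intro h; rw [h] at hfin; simp at hfin
    obtain ⟨n, hn, hjn⟩ := hitTime_spec hfinH
    by_cases hcase : i ≤ c m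
    · constructor
      · intro _
        exact ((ih c hc0 hfin' i hi0).1 hcase).trans le_self_add
      · intro hlt
        rcases lt_or_eq_of_le hcase with hlt' | heq
        · exact ((ih c hc0 hfin' i hi0).2 hlt').trans le_self_add
        · -- i = c m < c (m+1), last hit time ≥ 1
          have h1 : (1 : ℕ∞) ≤ hitTime S (c m) (c (m + 1)) := by
            have := hitTime_ge hS (c m) (c (m + 1))
            have hne : (c (m + 1) - c m).natAbs ≠ 0 := by omega
            calc (1 : ℕ∞) ≤ ((c (m + 1) - c m).natAbs : ℕ∞) := by
                  exact_mod_cast Nat.one_le_iff_ne_zero.2 hne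
              _ ≤ _ := this
          calc frogT S i + 1 ≤ (∑ l ∈ Finset.range m, hitTime S (c l) (c (l + 1))) + 1 :=
                add_le_add_left ((ih c hc0 hfin' i hi0).1 hcase) 1
            _ ≤ _ := add_le_add_right h1 _
    · push_neg at hcase
      -- c m < i ; use IVT on the last walk segment
      have hstep : ∀ s : ℕ, c m + S (c m) (s + 1) = (c m + S (c m) s) + 1 ∨
          c m + S (c m) (s + 1) = (c m + S (c m) s) - 1 := by
        intro s; rcases hS.2 (c m) s with h | h <;> [left; right] <;> omega
      have hf0 : c m + S (c m) 0 ≤ i := by rw [hS.1]; omega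
      constructor
      · intro hle
        obtain ⟨s, hsn, hfs⟩ := ivt (fun s => c m + S (c m) s) hstep
          n i hf0 (show i ≤ c m + S (c m) n by omega)
        have hfs' : c m + S (c m) s = i := hfs
        calc frogT S i
            ≤ (∑ l ∈ Finset.range m, hitTime S (c l) (c (l + 1))) + hitTime S (c m) i :=
              frogT_le_chain_add m c hc0 i
          _ ≤ (∑ l ∈ Finset.range m, hitTime S (c l) (c (l + 1))) + (n : ℕ∞) := by
              refine add_le_add_right ((hitTime_le hfs').trans ?_) _
              exact_mod_cast Nat.cast_le.2 hsn
          _ = _ := by rw [hn]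
      · intro hlt
        obtain ⟨s, hsn, hfs⟩ := ivt (fun s => c m + S (c m) s) hstep
          n i hf0 (show i ≤ c m + S (c m) n by omega)
        have hfs' : c m + S (c m) s = i := hfs
        have hsn' : s < n := by
          rcases lt_or_eq_of_le hsn with h | h
          · exact h
          · exfalso; rw [h] at hfs'; omega
        calc frogT S i + 1
            ≤ ((∑ l ∈ Finset.range m, hitTime S (c l) (c (l + 1))) + hitTime S (c m) i) + 1 :=
              add_le_add_left (frogT_le_chain_add m c hc0 i) 1
          _ ≤ ((∑ l ∈ Finset.range m, hitTime S (c l) (c (l + 1))) + (s : ℕ∞)) + 1 :=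
              add_le_add_left (add_le_add_right (hitTime_le hfs') _) 1
          _ = (∑ l ∈ Finset.range m, hitTime S (c l) (c (l + 1))) + ((s + 1 : ℕ) : ℕ∞) := by
              push_cast; rw [add_assoc]
          _ ≤ (∑ l ∈ Finset.range m, hitTime S (c l) (c (l + 1))) + (n : ℕ∞) := by
              refine add_le_add_right ?_ _
              exact_mod_cast Nat.cast_le.2 hsn'
          _ = _ := by rw [hn]

lemma frogT_add_one_le (hS : Steps S) {i j : ℤ} (hi0 : 0 ≤ i) (hij : i < j) :
    frogT S i + 1 ≤ frogT S j := by
  refine le_sInf fun t ht => ?_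
  obtain ⟨m, c, hc0, hcm, rfl⟩ := ht
  by_cases hfin : ∑ l ∈ Finset.range m, hitTime S (c l) (c (l + 1)) = ⊤
  · rw [hfin]; exact le_top
  · exact (chain_cross hS m c hc0 hfin i hi0).2 (by omega)

end FrogAux

section Part2
namespace FrogAux
variable {S : ℤ → ℕ → ℤ}

lemma ne_top_of_le_coe {a : ℕ∞} {n : ℕ} (h : a ≤ (n : ℕ∞)) : a ≠ ⊤ := by
  intro h2; rw [h2] at h; exact absurd h (by simp)

lemma frogZ_of_le {j : ℤ} {n : ℕ} (h : frogT S j ≤ (n : ℕ∞)) :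
    frogZ S n j = j + S j (n - (frogT S j).toNat) := if_pos h

/-- No active frog is strictly to the right of `i` before `i` is activated. -/
lemma active_le (hS : Steps S) :
    ∀ (n : ℕ) (i : ℤ), 0 ≤ i → (n : ℕ∞) ≤ frogT S i →
      ∀ j : ℤ, frogT S j ≤ (n : ℕ∞) → frogZ S n j ≤ i := by
  intro n
  induction n with
  | zero =>
    intro i hi0 _ j hj
    have hj0 : j = 0 := by
      have := (frogT_ge hS j).trans hj
      have : (j.natAbs : ℕ∞) ≤ ((0 : ℕ) : ℕ∞) := by exact_mod_cast this
      have : j.natAbs ≤ 0 := by exact_mod_cast this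
      omega
    subst hj0
    rw [frogZ_of_le hj]
    have h0 : (0 : ℕ) - (frogT S 0).toNat = 0 := by omega
    rw [h0, hS.1]
    omega
  | succ n ih =>
    intro i hi0 hni j hj
    have hni' : (n : ℕ∞) ≤ frogT S i := le_trans (by exact_mod_cast Nat.le_succ n) hni
    have hTine : ¬ frogT S i ≤ (n : ℕ∞) := by
      intro hcon
      have : ((n + 1 : ℕ) : ℕ∞) ≤ (n : ℕ∞) := hni.trans hcon
      have : n + 1 ≤ n := by exact_mod_cast this
      omega
    by_cases hj' : frogT S j ≤ (n : ℕ∞)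
    · -- frog j was already active at time n
      have hZn := ih i hi0 hni' j hj'
      set a := (frogT S j).toNat with ha
      have haTn : (frogT S j) = (a : ℕ∞) := (ENat.coe_toNat (ne_top_of_le_coe hj')).symm
      have haln : a ≤ n := by
        rw [haTn] at hj'; exact_mod_cast hj'
      have hZn' : frogZ S n j = j + S j (n - a) := frogZ_of_le hj'
      have hZn1 : frogZ S (n + 1) j = j + S j ((n - a) + 1) := by
        rw [frogZ_of_le hj]
        congr 2
        omega
      rcases hS.2 j (n - a) with hstep | hstep
      · -- up step; equality would contradict minimality of frogT S i
        by_contra hcon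
        push_neg at hcon
        have hZeq : j + S j (n - a) = i := by
          rw [hZn1, hstep] at hcon
          rw [hZn'] at hZn
          omega
        have hhit : hitTime S j i ≤ ((n - a : ℕ) : ℕ∞) := hitTime_le hZeq
        have : frogT S i ≤ (n : ℕ∞) := by
          calc frogT S i ≤ frogT S j + hitTime S j i := frogT_le_add j i
            _ ≤ (a : ℕ∞) + ((n - a : ℕ) : ℕ∞) := by
                rw [← haTn]; exact add_le_add_right hhit _
            _ = (n : ℕ∞) := by
                rw [← Nat.cast_add]
                congr 1
                omega
        exact hTine this
      · rw [hZn1, hstep]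
        rw [hZn'] at hZn
        omega
    · -- frog j is activated exactly at time n + 1, so it sits at j
      push_neg at hj'
      have hTj : frogT S j = ((n + 1 : ℕ) : ℕ∞) := by
        refine le_antisymm hj ?_
        have h1 : (n : ℕ∞) + 1 ≤ frogT S j := by
          rw [ENat.add_one_le_iff (by simp : (n : ℕ∞) ≠ ⊤)]
          exact hj'
        calc ((n + 1 : ℕ) : ℕ∞) = (n : ℕ∞) + 1 := by push_cast; ring
          _ ≤ frogT S j := h1
      have hZ : frogZ S (n + 1) j = j := by
        rw [frogZ_of_le hj, hTj]
        have hcast : ((n : ℕ∞) + 1) = ((n + 1 : ℕ) : ℕ∞) := by push_cast; ring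
        have : n + 1 - ((n : ℕ∞) + 1).toNat = 0 := by
          rw [hcast, ENat.toNat_coe]
          omega
        rw [show ((n + 1 : ℕ) : ℕ∞) = (n : ℕ∞) + 1 from hcast.symm, this, hS.1, add_zero]
      rw [hZ]
      by_contra hcon
      push_neg at hcon
      have h2 : frogT S i + 1 ≤ frogT S j := frogT_add_one_le hS hi0 hcon
      rw [hTj] at h2
      have hfin : frogT S i ≠ ⊤ := by
        intro htop; rw [htop] at h2
        have : (⊤ : ℕ∞) + 1 = ⊤ := by simp
        rw [this] at h2
        refine absurd (top_le_iff.mp h2) ?_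
        rw [show ((n + 1 : ℕ) : ℕ∞) = (n : ℕ∞) + 1 from by push_cast; ring] at h2 ⊢
        intro hcon2
        exact ENat.coe_ne_top (n + 1) (by push_cast; rw [← hcon2])
      have h3 : frogT S i < ((n + 1 : ℕ) : ℕ∞) := by
        rw [← ENat.add_one_le_iff hfin]; exact h2
      have h4 : ((n + 1 : ℕ) : ℕ∞) ≤ frogT S i := hni
      exact absurd (h4.trans_lt h3) (lt_irrefl _)

/-- Any active frog's position is at most `n` at time `n`. -/
lemma frogZ_le_of_active (hS : Steps S) {j : ℤ} {n : ℕ} (hj : frogT S j ≤ (n : ℕ∞)) :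
    frogZ S n j ≤ (n : ℤ) := by
  rw [frogZ_of_le hj]
  set a := (frogT S j).toNat with ha
  have haTn : (frogT S j) = (a : ℕ∞) := (ENat.coe_toNat (ne_top_of_le_coe hj)).symm
  have haln : a ≤ n := by rw [haTn] at hj; exact_mod_cast hj
  have h1 : (j.natAbs : ℕ∞) ≤ (a : ℕ∞) := haTn ▸ frogT_ge hS j
  have h2 : j.natAbs ≤ a := by exact_mod_cast h1
  have h3 : (S j (n - a)).natAbs ≤ n - a := natAbs_S_le hS j (n - a)
  omega

lemma activeSet_nonempty (n : ℕ) :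
    ∃ z : ℤ, ∃ i : ℤ, frogT S i ≤ (n : ℕ∞) ∧ frogZ S n i = z := by
  refine ⟨frogZ S n 0, 0, ?_, rfl⟩
  rw [frogT_zero]; exact zero_le

lemma activeSet_bddAbove (hS : Steps S) (n : ℕ) :
    BddAbove {z : ℤ | ∃ i : ℤ, frogT S i ≤ (n : ℕ∞) ∧ frogZ S n i = z} := by
  refine ⟨(n : ℤ), fun z hz => ?_⟩
  obtain ⟨i, hi, rfl⟩ := hz
  exact frogZ_le_of_active hS hi

/-- At the activation time of site `i ≥ 0`, the maximum of the active frogs is exactly `i`. -/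
lemma frogM_activation (hS : Steps S) {i : ℤ} (hi0 : 0 ≤ i) (hfin : frogT S i ≠ ⊤) :
    frogM S ((frogT S i).toNat) = i := by
  set n := (frogT S i).toNat with hn
  have hTn : frogT S i = (n : ℕ∞) := (ENat.coe_toNat hfin).symm
  have hTle : frogT S i ≤ (n : ℕ∞) := le_of_eq hTn
  refine le_antisymm ?_ ?_
  · refine csSup_le ⟨frogZ S n 0, 0, by rw [frogT_zero]; exact zero_le, rfl⟩ ?_
    rintro z ⟨j, hj, rfl⟩
    exact active_le hS n i hi0 (le_of_eq hTn.symm) j hj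
  · refine le_csSup (activeSet_bddAbove hS n) ?_
    refine ⟨i, hTle, ?_⟩
    rw [frogZ_of_le hTle, ← hn]
    have : n - n = 0 := by omega
    rw [this, hS.1, add_zero]

end FrogAux
end Part2

section Prob
namespace FrogAux

open Real

variable {Ω : Type*} [MeasurableSpace Ω] {P : Measure Ω} [IsProbabilityMeasure P]

lemma twoPoint_ae {W : Ω → ℝ} (hW : Measurable W) {q : ℝ} (hq0 : 0 ≤ q) (hq1 : q ≤ 1)
    (h1 : P {ω | W ω = 1} = ENNReal.ofReal q)
    (h2 : P {ω | W ω = -1} = ENNReal.ofReal (1 - q)) :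
    ∀ᵐ ω ∂P, W ω = 1 ∨ W ω = -1 := by
  have hA : MeasurableSet {ω | W ω = 1} := hW (measurableSet_singleton 1)
  have hB : MeasurableSet {ω | W ω = -1} := hW (measurableSet_singleton (-1))
  have hdisj : Disjoint {ω | W ω = 1} {ω | W ω = -1} := by
    rw [Set.disjoint_left]
    intro ω hω1 hω2
    simp only [Set.mem_setOf_eq] at hω1 hω2
    rw [hω1] at hω2; norm_num at hω2
  have hunion : P ({ω | W ω = 1} ∪ {ω | W ω = -1}) = 1 := by
    rw [measure_union hdisj hB, h1, h2, ← ENNReal.ofReal_add hq0 (by linarith)]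
    norm_num
  have hcompl : P ({ω | W ω = 1} ∪ {ω | W ω = -1})ᶜ = 0 := by
    rw [measure_compl (hA.union hB) (measure_ne_top P _), hunion, measure_univ, tsub_self]
  rw [ae_iff]
  have hsets : {ω | ¬(W ω = 1 ∨ W ω = -1)} = ({ω | W ω = 1} ∪ {ω | W ω = -1})ᶜ := by
    ext ω
    simp [not_or]
  rw [hsets]
  exact hcompl

lemma twoPoint_integrable {W : Ω → ℝ} (hW : Measurable W) {q : ℝ} (hq0 : 0 ≤ q) (hq1 : q ≤ 1)
    (h1 : P {ω | W ω = 1} = ENNReal.ofReal q)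
    (h2 : P {ω | W ω = -1} = ENNReal.ofReal (1 - q)) (t : ℝ) :
    Integrable (fun ω => exp (t * W ω)) P := by
  refine Integrable.mono' (integrable_const (exp |t|))
    ((hW.const_mul t).exp.aestronglyMeasurable) ?_
  filter_upwards [twoPoint_ae hW hq0 hq1 h1 h2] with ω hω
  rw [Real.norm_eq_abs, abs_of_pos (exp_pos _)]
  rcases hω with h | h <;> rw [h] <;> apply exp_le_exp.2
  · rw [mul_one]; exact le_abs_self t
  · rw [mul_neg_one]; exact neg_le_abs t

lemma twoPoint_mgf {W : Ω → ℝ} (hW : Measurable W) {q : ℝ} (hq0 : 0 ≤ q) (hq1 : q ≤ 1)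
    (h1 : P {ω | W ω = 1} = ENNReal.ofReal q)
    (h2 : P {ω | W ω = -1} = ENNReal.ofReal (1 - q)) (t : ℝ) :
    mgf W P t = q * exp t + (1 - q) * exp (-t) := by
  have hA : MeasurableSet {ω | W ω = 1} := hW (measurableSet_singleton 1)
  have hint := twoPoint_integrable hW hq0 hq1 h1 h2 t
  have hsplit := integral_add_compl hA hint
  have hPA : (P {ω | W ω = 1}).toReal = q := by rw [h1, ENNReal.toReal_ofReal hq0]
  have hPAc : (P {ω | W ω = 1}ᶜ).toReal = 1 - q := by
    rw [prob_compl_eq_one_sub hA, h1]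
    rw [show (1 : ℝ≥0∞) = ENNReal.ofReal (1 : ℝ) by simp, ← ENNReal.ofReal_sub _ hq0,
      ENNReal.toReal_ofReal (by linarith)]
  have hIA : ∫ ω in {ω | W ω = 1}, exp (t * W ω) ∂P = q * exp t := by
    rw [setIntegral_congr_fun hA (g := fun _ => exp t) (fun ω hω => by
      simp only [Set.mem_setOf_eq] at hω; rw [hω, mul_one])]
    rw [setIntegral_const, smul_eq_mul, measureReal_def, hPA]
  have hIAc : ∫ ω in {ω | W ω = 1}ᶜ, exp (t * W ω) ∂P = (1 - q) * exp (-t) := by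
    rw [setIntegral_congr_ae hA.compl (g := fun _ => exp (-t)) ?_]
    · rw [setIntegral_const, smul_eq_mul, measureReal_def, hPAc]
    · filter_upwards [twoPoint_ae hW hq0 hq1 h1 h2] with ω hω hmem
      rcases hω with h | h
      · exact absurd h hmem
      · rw [h, mul_neg_one]
  rw [mgf, ← hsplit, hIA, hIAc]

lemma exists_exp_lt_one {q c : ℝ} (hq0 : 0 ≤ q) (hq1 : q ≤ 1) (hc : 2 * q - 1 < c) :
    ∃ t : ℝ, 0 < t ∧
      exp (-(c * t)) * (q * exp t + (1 - q) * exp (-t)) < 1 := by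
  set g : ℝ → ℝ := fun t => exp (-(c * t)) * (q * exp t + (1 - q) * exp (-t)) with hg
  have hder : HasDerivAt g ((2 * q - 1) - c) 0 := by
    have h1 : HasDerivAt (fun t : ℝ => -(c * t)) (-c) 0 := by
      exact (((hasDerivAt_id' (0 : ℝ)).const_mul c).neg).congr_deriv (by ring)
    have h2 : HasDerivAt (fun t : ℝ => exp (-(c * t))) (exp (-(c * 0)) * (-c)) 0 := h1.exp
    have h3 : HasDerivAt (fun t : ℝ => q * exp t + (1 - q) * exp (-t))
        (q * exp 0 + (1 - q) * (exp (-0) * (-1))) 0 := by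
      have ha : HasDerivAt (fun t : ℝ => exp t) (exp 0) 0 := Real.hasDerivAt_exp 0
      have hb : HasDerivAt (fun t : ℝ => exp (-t)) (exp (-0) * (-1)) 0 := by
        have : HasDerivAt (fun t : ℝ => -t) (-1) 0 := (hasDerivAt_id' (0 : ℝ)).neg
        exact this.exp
      exact (ha.const_mul q).add (hb.const_mul (1 - q))
    have := h2.mul h3
    convert this using 1
    · rfl
    · rfl
    · rfl
    simp only [mul_zero, neg_zero, Real.exp_zero, one_mul, mul_one, mul_neg_one]
    ring
  have hneg : (2 * q - 1) - c < 0 := by linarith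
  rw [hasDerivAt_iff_tendsto_slope] at hder
  have hev : ∀ᶠ t in 𝓝[≠] (0 : ℝ), slope g 0 t < 0 := hder.eventually_lt_const hneg
  have hev' : ∀ᶠ t in 𝓝[>] (0 : ℝ), slope g 0 t < 0 :=
    hev.filter_mono (nhdsWithin_mono 0 (fun x hx => ne_of_gt hx))
  obtain ⟨t, hts, ht0⟩ := (hev'.and eventually_mem_nhdsWithin).exists
  refine ⟨t, ht0, ?_⟩
  have hg0 : g 0 = 1 := by simp [hg]
  have hslope : slope g 0 t = (g t - 1) / t := by
    rw [slope_def_field, hg0, sub_zero]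
  rw [hslope] at hts
  rcases div_neg_iff.mp hts with ⟨h1, h2⟩ | ⟨h1, h2⟩
  · exact absurd ht0 (not_lt.2 h2.le)
  · exact sub_neg.mp h1

lemma chernoff_sum {W : ℤ × ℕ → Ω → ℝ} (hmeas : ∀ ik, Measurable (W ik))
    (hindep : iIndepFun W P) {q : ℝ} (hq0 : 0 ≤ q) (hq1 : q ≤ 1)
    (h1 : ∀ ik, P {ω | W ik ω = 1} = ENNReal.ofReal q)
    (h2 : ∀ ik, P {ω | W ik ω = -1} = ENNReal.ofReal (1 - q))
    {c : ℝ} (hc : 2 * q - 1 < c) :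
    ∃ r : ℝ, 0 ≤ r ∧ r < 1 ∧ ∀ (i : ℤ) (n : ℕ),
      P {ω | c * n ≤ ∑ k ∈ Finset.Icc 1 n, W (i, k) ω} ≤ ENNReal.ofReal (r ^ n) := by
  obtain ⟨t, ht0, htlt⟩ := exists_exp_lt_one hq0 hq1 hc
  set h : ℝ := q * exp t + (1 - q) * exp (-t) with hh
  set r : ℝ := exp (-(c * t)) * h with hr
  have hh0 : 0 ≤ h := by
    refine add_nonneg (mul_nonneg hq0 (exp_nonneg t)) (mul_nonneg (by linarith) (exp_nonneg _))
  have hr0 : 0 ≤ r := mul_nonneg (exp_nonneg _) hh0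
  refine ⟨r, hr0, htlt, fun i n => ?_⟩
  set s : Finset (ℤ × ℕ) :=
    (Finset.Icc 1 n).map ⟨fun k => ((i, k) : ℤ × ℕ), fun a b hab => by
      simpa using hab⟩ with hs
  have hYsum : ∀ ω, (∑ j ∈ s, W j) ω = ∑ k ∈ Finset.Icc 1 n, W (i, k) ω := by
    intro ω
    rw [Finset.sum_apply, hs, Finset.sum_map]
    rfl
  have h_int : ∀ j ∈ s, Integrable (fun ω => exp (t * W j ω)) P := fun j _ =>
    twoPoint_integrable (hmeas j) hq0 hq1 (h1 j) (h2 j) t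
  have h_int_sum := hindep.integrable_exp_mul_sum hmeas h_int
  have hchern := measure_ge_le_exp_mul_mgf (μ := P) (X := ∑ j ∈ s, W j) (c * n) ht0.le h_int_sum
  have hmgf : mgf (∑ j ∈ s, W j) P t = h ^ n := by
    rw [hindep.mgf_sum hmeas s]
    have hconst : ∀ j ∈ s, mgf (W j) P t = h := fun j _ =>
      twoPoint_mgf (hmeas j) hq0 hq1 (h1 j) (h2 j) t
    rw [Finset.prod_congr rfl hconst, Finset.prod_const]
    congr 1
    rw [hs, Finset.card_map, Nat.card_Icc]
    omega
  have hbound : (P {ω | c * (n : ℝ) ≤ (∑ j ∈ s, W j) ω}).toReal ≤ r ^ n := by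
    refine hchern.trans ?_
    rw [hmgf, hr, mul_pow, ← Real.exp_nat_mul]
    have : -t * (c * (n : ℝ)) = (n : ℝ) * (-(c * t)) := by ring
    rw [this]
  have hset : {ω | c * (n : ℝ) ≤ ∑ k ∈ Finset.Icc 1 n, W (i, k) ω} =
      {ω | c * (n : ℝ) ≤ (∑ j ∈ s, W j) ω} := by
    ext ω; rw [Set.mem_setOf_eq, Set.mem_setOf_eq, hYsum]
  rw [hset]
  exact (ENNReal.le_ofReal_iff_toReal_le (measure_ne_top P _) (pow_nonneg hr0 n)).2 hbound

end FrogAux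
end Prob


section Prob2
namespace FrogAux
open Real

variable {Ω : Type*} [MeasurableSpace Ω] {P : Measure Ω} [IsProbabilityMeasure P]
  {X : ℤ → ℕ → Ω → ℤ} {p : ℝ}

lemma model_tail (hmodel : IsFrogModel P X p) (hp : 1 / 2 < p) (hp1 : p < 1)
    {ε : ℝ} (hε : 0 < ε) :
    ∃ r : ℝ, 0 ≤ r ∧ r < 1 ∧ ∀ (i : ℤ) (n : ℕ),
      P {ω | ε * n ≤ |((frogS X ω i n : ℤ) : ℝ) - (2 * p - 1) * n|} ≤
        ENNReal.ofReal (2 * r ^ n) := by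
  have hp0 : 0 ≤ p := by linarith
  have hp1' : p ≤ 1 := hp1.le
  set Xr : ℤ × ℕ → Ω → ℝ := fun ik ω => ((X ik.1 ik.2 ω : ℤ) : ℝ) with hXr
  have hXrmeas : ∀ ik, Measurable (Xr ik) := fun ik =>
    (measurable_from_top (f := fun z : ℤ => (z : ℝ))).comp (hmodel.meas ik.1 ik.2)
  have hXrindep : iIndepFun Xr P :=
    hmodel.indep.comp (fun _ => (fun z : ℤ => (z : ℝ))) (fun _ => measurable_from_top)
  have hXr1 : ∀ ik : ℤ × ℕ, P {ω | Xr ik ω = 1} = ENNReal.ofReal p := by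
    intro ik
    have : {ω | Xr ik ω = 1} = {ω | X ik.1 ik.2 ω = 1} := by
      ext ω; simp only [hXr, Set.mem_setOf_eq]
      exact_mod_cast Iff.rfl
    rw [this, hmodel.prob_one]
  have hXrneg1 : ∀ ik : ℤ × ℕ, P {ω | Xr ik ω = -1} = ENNReal.ofReal (1 - p) := by
    intro ik
    have : {ω | Xr ik ω = -1} = {ω | X ik.1 ik.2 ω = -1} := by
      ext ω; simp only [hXr, Set.mem_setOf_eq]
      exact_mod_cast Iff.rfl
    rw [this, hmodel.prob_neg_one]
  -- upper tail
  obtain ⟨r₁, hr₁0, hr₁1, hbd₁⟩ := chernoff_sum hXrmeas hXrindep hp0 hp1' hXr1 hXrneg1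
    (c := (2 * p - 1) + ε) (by linarith)
  -- lower tail
  set Xn : ℤ × ℕ → Ω → ℝ := fun ik ω => -((X ik.1 ik.2 ω : ℤ) : ℝ) with hXn
  have hXnmeas : ∀ ik, Measurable (Xn ik) := fun ik =>
    (measurable_from_top (f := fun z : ℤ => -(z : ℝ))).comp (hmodel.meas ik.1 ik.2)
  have hXnindep : iIndepFun Xn P :=
    hmodel.indep.comp (fun _ => (fun z : ℤ => -(z : ℝ))) (fun _ => measurable_from_top)
  have hXn1 : ∀ ik : ℤ × ℕ, P {ω | Xn ik ω = 1} = ENNReal.ofReal (1 - p) := by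
    intro ik
    have : {ω | Xn ik ω = 1} = {ω | X ik.1 ik.2 ω = -1} := by
      ext ω; simp only [hXn, Set.mem_setOf_eq, neg_eq_iff_eq_neg]
      exact_mod_cast Iff.rfl
    rw [this, hmodel.prob_neg_one]
  have hXnneg1 : ∀ ik : ℤ × ℕ, P {ω | Xn ik ω = -1} = ENNReal.ofReal (1 - (1 - p)) := by
    intro ik
    have : {ω | Xn ik ω = -1} = {ω | X ik.1 ik.2 ω = 1} := by
      ext ω; simp only [hXn, Set.mem_setOf_eq, neg_eq_iff_eq_neg, neg_neg]
      exact_mod_cast Iff.rfl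
    rw [this, hmodel.prob_one]
    congr 1
    ring
  obtain ⟨r₂, hr₂0, hr₂1, hbd₂⟩ := chernoff_sum hXnmeas hXnindep (by linarith) (by linarith)
    hXn1 hXnneg1 (c := ε - (2 * p - 1)) (by linarith)
  set r : ℝ := max r₁ r₂ with hrdef
  have hr0 : 0 ≤ r := le_trans hr₁0 (le_max_left _ _)
  refine ⟨r, hr0, max_lt hr₁1 hr₂1, fun i n => ?_⟩
  have hsubset : {ω | ε * n ≤ |((frogS X ω i n : ℤ) : ℝ) - (2 * p - 1) * n|} ⊆
      {ω | ((2 * p - 1) + ε) * n ≤ ∑ k ∈ Finset.Icc 1 n, Xr (i, k) ω} ∪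
      {ω | (ε - (2 * p - 1)) * n ≤ ∑ k ∈ Finset.Icc 1 n, Xn (i, k) ω} := by
    intro ω hω
    simp only [Set.mem_setOf_eq] at hω
    have hsum : ∑ k ∈ Finset.Icc 1 n, Xr (i, k) ω = ((frogS X ω i n : ℤ) : ℝ) := by
      simp only [hXr, frogS]
      push_cast
      rfl
    have hsumn : ∑ k ∈ Finset.Icc 1 n, Xn (i, k) ω = -((frogS X ω i n : ℤ) : ℝ) := by
      simp only [hXn, frogS]
      push_cast
      rw [← Finset.sum_neg_distrib]
    rcases le_abs.mp hω with h | h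
    · left
      simp only [Set.mem_setOf_eq, hsum]
      linarith
    · right
      simp only [Set.mem_setOf_eq, hsumn]
      linarith
  calc P {ω | ε * n ≤ |((frogS X ω i n : ℤ) : ℝ) - (2 * p - 1) * n|}
      ≤ P ({ω | ((2 * p - 1) + ε) * n ≤ ∑ k ∈ Finset.Icc 1 n, Xr (i, k) ω} ∪
          {ω | (ε - (2 * p - 1)) * n ≤ ∑ k ∈ Finset.Icc 1 n, Xn (i, k) ω}) :=
        measure_mono hsubset
    _ ≤ P {ω | ((2 * p - 1) + ε) * n ≤ ∑ k ∈ Finset.Icc 1 n, Xr (i, k) ω} +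
        P {ω | (ε - (2 * p - 1)) * n ≤ ∑ k ∈ Finset.Icc 1 n, Xn (i, k) ω} :=
        measure_union_le _ _
    _ ≤ ENNReal.ofReal (r₁ ^ n) + ENNReal.ofReal (r₂ ^ n) := add_le_add (hbd₁ i n) (hbd₂ i n)
    _ ≤ ENNReal.ofReal (2 * r ^ n) := by
        rw [← ENNReal.ofReal_add (pow_nonneg hr₁0 n) (pow_nonneg hr₂0 n)]
        refine ENNReal.ofReal_le_ofReal ?_
        have h1 : r₁ ^ n ≤ r ^ n := pow_le_pow_left₀ hr₁0 (le_max_left _ _) n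
        have h2 : r₂ ^ n ≤ r ^ n := pow_le_pow_left₀ hr₂0 (le_max_right _ _) n
        linarith

/-- Almost surely all steps are `±1`. -/
lemma good_steps (hmodel : IsFrogModel P X p) (hp : 1 / 2 < p) (hp1 : p < 1) :
    ∀ᵐ ω ∂P, ∀ (i : ℤ) (k : ℕ), X i k ω = 1 ∨ X i k ω = -1 := by
  rw [ae_all_iff]
  intro i
  rw [ae_all_iff]
  intro k
  have hA : MeasurableSet {ω | X i k ω = 1} := hmodel.meas i k (measurableSet_singleton 1)
  have hB : MeasurableSet {ω | X i k ω = -1} := hmodel.meas i k (measurableSet_singleton (-1))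
  have hdisj : Disjoint {ω | X i k ω = 1} {ω | X i k ω = -1} := by
    rw [Set.disjoint_left]
    intro ω h1 h2
    simp only [Set.mem_setOf_eq] at h1 h2
    rw [h1] at h2; norm_num at h2
  have hunion : P ({ω | X i k ω = 1} ∪ {ω | X i k ω = -1}) = 1 := by
    rw [measure_union hdisj hB, hmodel.prob_one, hmodel.prob_neg_one,
      ← ENNReal.ofReal_add (by linarith) (by linarith)]
    norm_num
  have hcompl : P ({ω | X i k ω = 1} ∪ {ω | X i k ω = -1})ᶜ = 0 := by
    rw [measure_compl (hA.union hB) (measure_ne_top P _), hunion, measure_univ, tsub_self]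
  rw [ae_iff]
  have hsets : {ω | ¬(X i k ω = 1 ∨ X i k ω = -1)} =
      ({ω | X i k ω = 1} ∪ {ω | X i k ω = -1})ᶜ := by
    ext ω; simp [not_or]
  rw [hsets]
  exact hcompl

lemma tsum_tail_ne_top {r : ℝ} (hr0 : 0 ≤ r) (hr1 : r < 1) :
    (∑' n : ℕ, ENNReal.ofReal (2 * r ^ n)) ≠ ⊤ := by
  have hx1 : ENNReal.ofReal r < 1 := by
    rw [show (1 : ℝ≥0∞) = ENNReal.ofReal 1 by simp]
    exact (ENNReal.ofReal_lt_ofReal_iff one_pos).2 hr1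
  have heq : ∀ n : ℕ, ENNReal.ofReal (2 * r ^ n) =
      ENNReal.ofReal 2 * (ENNReal.ofReal r) ^ n := by
    intro n
    rw [ENNReal.ofReal_mul (by norm_num), ENNReal.ofReal_pow hr0]
  rw [tsum_congr heq, ENNReal.tsum_mul_left, ENNReal.tsum_geometric]
  exact ENNReal.mul_ne_top ENNReal.ofReal_ne_top
    (ENNReal.inv_ne_top.2 (by simpa [tsub_eq_zero_iff_le] using hx1.not_ge))

/-- Almost surely the walk of frog 0 eventually exceeds `(2p-1)/2 · n`. -/
lemma good_zero_walk (hmodel : IsFrogModel P X p) (hp : 1 / 2 < p) (hp1 : p < 1) :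
    ∀ᵐ ω ∂P, ∀ᶠ n : ℕ in atTop, (2 * p - 1) / 2 * n < ((frogS X ω 0 n : ℤ) : ℝ) := by
  have hε : (0 : ℝ) < (2 * p - 1) / 2 := by linarith
  obtain ⟨r, hr0, hr1, hbd⟩ := model_tail hmodel hp hp1 hε
  set s : ℕ → Set Ω := fun n =>
    {ω | (2 * p - 1) / 2 * n ≤ |((frogS X ω 0 n : ℤ) : ℝ) - (2 * p - 1) * n|} with hs
  have hsum : (∑' n, P (s n)) ≠ ⊤ := by
    refine ne_top_of_le_ne_top (tsum_tail_ne_top hr0 hr1) (ENNReal.tsum_le_tsum fun n => ?_)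
    exact hbd 0 n
  filter_upwards [ae_eventually_notMem hsum] with ω hω
  filter_upwards [hω] with n hn
  simp only [hs, Set.mem_setOf_eq, not_le] at hn
  have := abs_lt.mp hn
  nlinarith [this.1, this.2]

/-- Almost surely, the uniform law of large numbers along `n ≥ i` holds for all precisions. -/
lemma good_unif (hmodel : IsFrogModel P X p) (hp : 1 / 2 < p) (hp1 : p < 1) :
    ∀ᵐ ω ∂P, ∀ m : ℕ, ∀ᶠ i : ℕ in atTop, ∀ n : ℕ, i ≤ n →
      |((frogS X ω i n : ℤ) : ℝ) - (2 * p - 1) * n| < (1 / (m + 1)) * n := by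
  rw [ae_all_iff]
  intro m
  have hε : (0 : ℝ) < 1 / (m + 1) := by positivity
  obtain ⟨r, hr0, hr1, hbd⟩ := model_tail hmodel hp hp1 hε
  set x : ℝ≥0∞ := ENNReal.ofReal r with hx
  have hx1 : x < 1 := by
    rw [hx, show (1 : ℝ≥0∞) = ENNReal.ofReal 1 by simp]
    exact (ENNReal.ofReal_lt_ofReal_iff one_pos).2 hr1
  set A : ℕ → Set Ω := fun i => ⋃ d : ℕ,
    {ω | (1 / (m + 1) : ℝ) * (i + d) ≤
      |((frogS X ω i (i + d) : ℤ) : ℝ) - (2 * p - 1) * (i + d)|} with hA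
  have hAbd : ∀ i, P (A i) ≤ ENNReal.ofReal 2 * x ^ i * (1 - x)⁻¹ := by
    intro i
    refine (measure_iUnion_le _).trans ?_
    have hterm : ∀ d : ℕ,
        P {ω | (1 / (m + 1) : ℝ) * (i + d) ≤
          |((frogS X ω i (i + d) : ℤ) : ℝ) - (2 * p - 1) * (i + d)|} ≤
        ENNReal.ofReal 2 * x ^ i * x ^ d := by
      intro d
      refine (by exact_mod_cast hbd i (i + d) :
        P _ ≤ ENNReal.ofReal (2 * r ^ (i + d))).trans (le_of_eq ?_)
      rw [ENNReal.ofReal_mul (by norm_num), ENNReal.ofReal_pow hr0, pow_add, hx, mul_assoc]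
    refine (ENNReal.tsum_le_tsum hterm).trans (le_of_eq ?_)
    rw [ENNReal.tsum_mul_left, ENNReal.tsum_geometric]
  have hsum : (∑' i, P (A i)) ≠ ⊤ := by
    refine ne_top_of_le_ne_top ?_ (ENNReal.tsum_le_tsum hAbd)
    have : ∀ i : ℕ, ENNReal.ofReal 2 * x ^ i * (1 - x)⁻¹ =
        (ENNReal.ofReal 2 * (1 - x)⁻¹) * x ^ i := fun i => by ring
    rw [tsum_congr this, ENNReal.tsum_mul_left, ENNReal.tsum_geometric]
    have hinv : (1 - x)⁻¹ ≠ ⊤ :=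
      ENNReal.inv_ne_top.2 (by simpa [tsub_eq_zero_iff_le] using hx1.not_ge)
    exact ENNReal.mul_ne_top (ENNReal.mul_ne_top ENNReal.ofReal_ne_top hinv) hinv
  filter_upwards [ae_eventually_notMem hsum] with ω hω
  filter_upwards [hω] with i hi n hn
  have hd : n = i + (n - i) := by omega
  rw [hA] at hi
  simp only [Set.mem_iUnion, Set.mem_setOf_eq, not_exists, not_le] at hi
  have h2 := hi (n - i)
  rw [← hd] at h2
  have hcast : ((i : ℝ) + ((n - i : ℕ) : ℝ)) = (n : ℝ) := by
    push_cast [Nat.cast_sub hn]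
    ring
  rw [hcast] at h2
  exact h2

end FrogAux
end Prob2


/-- **Equation (3) in the proof of Lemma 3.**
In the frog model with drift `p ∈ (1/2, 1)`, almost surely
`(S_{T_i}^i - i) / T_i → 2p - 1 - vmax` as `i → ∞` along the non-negative integers,
where `vmax` is the speed of the maximum. -/
theorem frog_walk_at_activation_centred
    {Ω : Type*} [MeasurableSpace Ω] (P : Measure Ω) [IsProbabilityMeasure P]
    (X : ℤ → ℕ → Ω → ℤ) (p : ℝ) (hmodel : IsFrogModel P X p)
    (hp : 1 / 2 < p) (hp1 : p < 1) (vmax : ℝ)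
    (hvmax : ∀ᵐ ω ∂P, Tendsto (fun n : ℕ => (frogM (frogS X ω) n : ℝ) / n) atTop (𝓝 vmax)) :
    ∀ᵐ ω ∂P, Tendsto (fun i : ℕ =>
        ((frogS X ω i ((frogT (frogS X ω) i).toNat) : ℝ) - (i : ℝ)) /
          ((frogT (frogS X ω) i).toNat : ℝ))
      atTop (𝓝 (2 * p - 1 - vmax)) := by
  filter_upwards [hvmax, FrogAux.good_steps hmodel hp hp1, FrogAux.good_zero_walk hmodel hp hp1,
    FrogAux.good_unif hmodel hp hp1] with ω hvω hstepω hzeroω hunifω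
  set S := frogS X ω with hSdef
  have hS : FrogAux.Steps S := by
    constructor
    · intro j; simp [hSdef, frogS]
    · intro j n
      have hsucc : S j (n + 1) = S j n + X j (n + 1) ω := by
        simp only [hSdef, frogS]
        rw [Finset.sum_Icc_succ_top (by omega : 1 ≤ n + 1)]
      rcases hstepω j (n + 1) with h | h
      · left; rw [hsucc, h]
      · right; rw [hsucc, h]; ring
  have hfin : ∀ i : ℤ, 0 ≤ i → frogT S i ≠ ⊤ := by
    intro i hi0
    obtain ⟨N, hN⟩ := eventually_atTop.mp hzeroω
    obtain ⟨n, hn⟩ := exists_nat_ge (max (N : ℝ) ((2 * i) / (2 * p - 1)))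
    have hnN : N ≤ n := by exact_mod_cast (le_max_left _ _).trans hn
    have hni : (i : ℝ) ≤ (2 * p - 1) / 2 * n := by
      have h2 : (2 * i : ℝ) / (2 * p - 1) ≤ n := (le_max_right _ _).trans hn
      rw [div_le_iff₀ (by linarith)] at h2
      linarith
    have hSn : (i : ℝ) ≤ ((S 0 n : ℤ) : ℝ) := hni.trans (hN n hnN).le
    have hSnz : i ≤ S 0 n := by exact_mod_cast hSn
    have hstep0 : ∀ s : ℕ, S 0 (s + 1) = S 0 s + 1 ∨ S 0 (s + 1) = S 0 s - 1 := hS.2 0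
    obtain ⟨s, hsn, hfs⟩ := FrogAux.ivt (S 0) hstep0 n i (by rw [hS.1]; omega) hSnz
    have hT : frogT S i ≤ (s : ℕ∞) := by
      have h1 := FrogAux.frogT_le_add (S := S) 0 i
      rw [FrogAux.frogT_zero, zero_add] at h1
      exact h1.trans (FrogAux.hitTime_le (by rw [zero_add, hfs]))
    exact FrogAux.ne_top_of_le_coe hT
  set a : ℕ → ℕ := fun i => (frogT S (i : ℤ)).toNat with ha
  have hacoe : ∀ i : ℕ, frogT S (i : ℤ) = ((a i : ℕ) : ℕ∞) := fun i =>
    (ENat.coe_toNat (hfin i (Int.natCast_nonneg i))).symm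
  have ha_ge : ∀ i : ℕ, i ≤ a i := by
    intro i
    have h1 : (((i : ℤ)).natAbs : ℕ∞) ≤ frogT S i := FrogAux.frogT_ge hS i
    rw [hacoe i] at h1
    have h2 : ((i : ℤ)).natAbs ≤ a i := by exact_mod_cast h1
    simpa [Int.natAbs_natCast] using h2
  have ha_tends : Tendsto a atTop atTop := tendsto_atTop_mono ha_ge tendsto_id
  have hM : ∀ i : ℕ, frogM S (a i) = (i : ℤ) := fun i =>
    FrogAux.frogM_activation hS (Int.natCast_nonneg i) (hfin i (Int.natCast_nonneg i))
  have h2 : Tendsto (fun i : ℕ => (i : ℝ) / (a i : ℝ)) atTop (𝓝 vmax) := by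
    have hcomp : Tendsto ((fun n : ℕ => (frogM S n : ℝ) / n) ∘ a) atTop (𝓝 vmax) :=
      hvω.comp ha_tends
    refine hcomp.congr fun i => ?_
    simp only [Function.comp_apply, hM i]
    push_cast
    ring
  have h3 : Tendsto (fun i : ℕ => ((S (i : ℤ) (a i) : ℤ) : ℝ) / (a i : ℝ)) atTop
      (𝓝 (2 * p - 1)) := by
    rw [Metric.tendsto_atTop]
    intro ε hε
    obtain ⟨m, hm⟩ := exists_nat_one_div_lt hε
    obtain ⟨N, hN⟩ := eventually_atTop.mp (hunifω m)
    refine ⟨max N 1, fun i hi => ?_⟩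
    have hiN : N ≤ i := (le_max_left _ _).trans hi
    have hi1 : 1 ≤ i := (le_max_right _ _).trans hi
    have hai1 : 1 ≤ a i := hi1.trans (ha_ge i)
    have ha0 : (0 : ℝ) < (a i : ℝ) := by exact_mod_cast hai1
    have hb := hN i hiN (a i) ((ha_ge i))
    rw [Real.dist_eq]
    have heq : ((S (i : ℤ) (a i) : ℤ) : ℝ) / (a i : ℝ) - (2 * p - 1) =
        (((S (i : ℤ) (a i) : ℤ) : ℝ) - (2 * p - 1) * (a i : ℝ)) / (a i : ℝ) := by
      field_simp
    rw [heq, abs_div, abs_of_pos ha0, div_lt_iff₀ ha0]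
    calc |((S (i : ℤ) (a i) : ℤ) : ℝ) - (2 * p - 1) * (a i : ℝ)| <
          (1 / (m + 1)) * (a i : ℝ) := hb
      _ ≤ ε * (a i : ℝ) := mul_le_mul_of_nonneg_right hm.le ha0.le
  have hfinal := h3.sub h2
  rw [show (2 * p - 1) - vmax = 2 * p - 1 - vmax by ring] at hfinal
  refine hfinal.congr fun i => ?_
  show ((S (i : ℤ) (a i) : ℤ) : ℝ) / (a i : ℝ) - (i : ℝ) / (a i : ℝ) =
      (((S (i : ℤ) ((frogT S (i : ℤ)).toNat) : ℤ) : ℝ) - (i : ℝ)) /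
        (((frogT S (i : ℤ)).toNat : ℝ))
  rw [← sub_div]
end
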